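/- Let g = su(2) × ℝ with bi-invariant inner product ⟨(A,x),(B,y)⟩_bi = Re tr(Aᴴ B) + xy, let U₁ ∈ su(2) with ⟨U₁,U₁⟩_bi = 1, let r > 0 and s ≠ 0, and set X = (r·U₁, s) and V = (a·U₁, b) for real numbers a, b. Let O_X = {(A, s) : A ∈ su(2), Re tr(Aᴴ A) = r²} denote the adjoint orbit of X under SU(2) × S¹. If l > b·s + r·|a|, then there exist symmetric bilinear forms α₀ and α₁ on g with α₁ ≠ 0 and a real ε > 0 such that for every t ∈ (0, ε) the form α₀ + t·α₁ is positive definite and satisfies √((α₀ + t·α₁)(Y,Y)) + ⟨Y,V⟩_bi = l for all Y ∈ O_X; that is, there is a one-dimensional family of inner products α on g for which the Randers norms F = √(α(·,·)) + ⟨·,V⟩_bi take the constant value l on the adjoint orbit of X. -/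

import Mathlib

open Matrix

attribute [local instance] LieRing.ofAssociativeRing

/-- The real Lie algebra `su(n)` of traceless skew-Hermitian `n × n` complex matrices,
as a Lie subalgebra of the Lie algebra of all `n × n` complex matrices (with commutator
bracket). -/
def su (n : ℕ) : LieSubalgebra ℝ (Matrix (Fin n) (Fin n) ℂ) where
  carrier := {A | Aᴴ = -A ∧ A.trace = 0}
  add_mem' := by
    rintro A B ⟨hA1, hA2⟩ ⟨hB1, hB2⟩
    constructor
    · simp [conjTranspose_add, hA1, hB1]; abel
    · simp [trace_add, hA2, hB2]
  zero_mem' := by simp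
  smul_mem' := by
    rintro c A ⟨hA1, hA2⟩
    constructor
    · simp [conjTranspose_smul, hA1]
    · simp [trace_smul, hA2]
  lie_mem' := by
    rintro A B ⟨hA1, hA2⟩ ⟨hB1, hB2⟩
    constructor
    · simp only [Ring.lie_def, conjTranspose_sub, conjTranspose_mul, hA1, hB1]
      simp only [mul_neg, neg_mul, neg_sub, neg_neg]
    · simp [Ring.lie_def, trace_sub, trace_mul_comm A B]

/-- The bi-invariant inner product `⟨A, B⟩_bi = Re tr(Aᴴ B)`. -/
noncomputable def binner {n : ℕ} (A B : Matrix (Fin n) (Fin n) ℂ) : ℝ :=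
  ((Aᴴ * B).trace).re

theorem conj_mem_su {n : ℕ} (u : specialUnitaryGroup (Fin n) ℂ) {A : Matrix (Fin n) (Fin n) ℂ}
    (hA : A ∈ su n) : (u : Matrix (Fin n) (Fin n) ℂ) * A * (u : Matrix (Fin n) (Fin n) ℂ)ᴴ ∈ su n := by
  obtain ⟨hA1, hA2⟩ := hA
  have hu : (u : Matrix (Fin n) (Fin n) ℂ)ᴴ * (u : Matrix (Fin n) (Fin n) ℂ) = 1 := by
    have hmem : (u : Matrix (Fin n) (Fin n) ℂ) ∈ unitaryGroup (Fin n) ℂ :=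
      (Submonoid.mem_inf.mp u.2).1
    rw [Matrix.mem_unitaryGroup_iff'] at hmem
    simpa [Matrix.star_eq_conjTranspose] using hmem
  constructor
  · simp only [conjTranspose_mul, conjTranspose_conjTranspose, hA1]
    simp [Matrix.mul_assoc]
  · calc ((u : Matrix (Fin n) (Fin n) ℂ) * A * (u : Matrix (Fin n) (Fin n) ℂ)ᴴ).trace
        = ((u : Matrix (Fin n) (Fin n) ℂ)ᴴ * ((u : Matrix (Fin n) (Fin n) ℂ) * A)).trace := by
          rw [trace_mul_comm]
      _ = A.trace := by rw [← Matrix.mul_assoc, hu, Matrix.one_mul]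
      _ = 0 := hA2

/-- The adjoint action of `SU(n)` on `su(n)`: `Ad u X = u X u⁻¹ = u X uᴴ`. -/
noncomputable def Ad {n : ℕ} (u : specialUnitaryGroup (Fin n) ℂ) (X : su n) : su n :=
  ⟨(u : Matrix (Fin n) (Fin n) ℂ) * (X : Matrix (Fin n) (Fin n) ℂ) *
    (u : Matrix (Fin n) (Fin n) ℂ)ᴴ, conj_mem_su u X.2⟩

variable {n : ℕ} (A B C : Matrix (Fin n) (Fin n) ℂ)

@[simp] lemma su_coe_add (A B : su 2) : ((A + B : su 2) : Matrix (Fin 2) (Fin 2) ℂ) = (A : Matrix (Fin 2) (Fin 2) ℂ) + B := rfl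
@[simp] lemma su_coe_smul (t : ℝ) (A : su 2) : ((t • A : su 2) : Matrix (Fin 2) (Fin 2) ℂ) = t • (A : Matrix (Fin 2) (Fin 2) ℂ) := rfl

lemma binner_comm : binner A B = binner B A := by
  unfold binner
  rw [show Bᴴ * A = (Aᴴ * B)ᴴ by simp [conjTranspose_mul], trace_conjTranspose]
  simp

lemma binner_add_left : binner (A + B) C = binner A C + binner B C := by
  simp [binner, conjTranspose_add, add_mul, trace_add]

lemma binner_add_right : binner C (A + B) = binner C A + binner C B := by
  simp [binner, mul_add, trace_add]

lemma binner_smul_left (c : ℝ) : binner (c • A) B = c * binner A B := by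
  simp [binner, conjTranspose_smul, smul_mul_assoc, trace_smul, Complex.smul_re]

lemma binner_smul_right (c : ℝ) : binner A (c • B) = c * binner A B := by
  simp [binner, mul_smul_comm, trace_smul, Complex.smul_re]

lemma binner_sub_left : binner (A - B) C = binner A C - binner B C := by
  simp [binner, conjTranspose_sub, sub_mul, trace_sub]

lemma binner_sub_right : binner C (A - B) = binner C A - binner C B := by
  simp [binner, mul_sub, trace_sub]

lemma binner_zero_left : binner 0 A = 0 := by simp [binner]
lemma binner_zero_right : binner A 0 = 0 := by simp [binner]

lemma binner_self_eq : binner A A = ∑ i, ∑ j, Complex.normSq (A j i) := by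
  simp [binner, trace, diag, mul_apply, Complex.re_sum, conjTranspose_apply,
    Complex.normSq_apply, Complex.mul_re]

lemma binner_self_nonneg : 0 ≤ binner A A := by
  rw [binner_self_eq]
  exact Finset.sum_nonneg fun i _ => Finset.sum_nonneg fun j _ => Complex.normSq_nonneg _

lemma binner_self_pos (h : A ≠ 0) : 0 < binner A A := by
  rcases (binner_self_nonneg A).lt_or_eq with h' | h'
  · exact h'
  · exfalso; apply h
    rw [binner_self_eq] at h'
    ext i j
    have := (Finset.sum_eq_zero_iff_of_nonneg (fun i _ => Finset.sum_nonneg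
      (fun j _ => Complex.normSq_nonneg _))).mp h'.symm j (Finset.mem_univ _)
    have := (Finset.sum_eq_zero_iff_of_nonneg (fun j _ => Complex.normSq_nonneg _)).mp
      this i (Finset.mem_univ _)
    simpa using Complex.normSq_eq_zero.mp this

lemma binner_sq_le (hB : binner B B = 1) : (binner A B)^2 ≤ binner A A := by
  have h := binner_self_nonneg (A - binner A B • B)
  simp only [binner_sub_left, binner_sub_right, binner_smul_left, binner_smul_right,
    hB, binner_comm B A] at h
  nlinarith [h]

noncomputable def lfun (a c : ℝ) (U : Matrix (Fin 2) (Fin 2) ℂ) : (su 2 × ℝ) →ₗ[ℝ] ℝ where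
  toFun x := a * binner (x.1 : Matrix (Fin 2) (Fin 2) ℂ) U + c * x.2
  map_add' x y := by
    simp only [Prod.fst_add, Prod.snd_add, su_coe_add, binner_add_left]
    ring
  map_smul' t x := by
    simp only [Prod.smul_fst, Prod.smul_snd, su_coe_smul, binner_smul_left,
      smul_eq_mul, RingHom.id_apply]
    ring

noncomputable def suForm : (su 2 × ℝ) →ₗ[ℝ] (su 2 × ℝ) →ₗ[ℝ] ℝ :=
  LinearMap.mk₂ ℝ (fun x y => binner (x.1 : Matrix (Fin 2) (Fin 2) ℂ) (y.1 : Matrix (Fin 2) (Fin 2) ℂ))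
    (fun x x' y => by simp [su_coe_add, binner_add_left])
    (fun t x y => by simp [su_coe_smul, binner_smul_left])
    (fun x y y' => by simp [su_coe_add, binner_add_right])
    (fun t x y => by simp [su_coe_smul, binner_smul_right])

noncomputable def sndForm : (su 2 × ℝ) →ₗ[ℝ] (su 2 × ℝ) →ₗ[ℝ] ℝ :=
  LinearMap.mk₂ ℝ (fun x y => x.2 * y.2)
    (fun x x' y => by simp [add_mul])
    (fun t x y => by simp; ring)
    (fun x y y' => by simp [mul_add])
    (fun t x y => by simp; ring)

lemma posdef_aux (a c r s t f q v : ℝ) (hs : s ≠ 0) (ht : 0 < t)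
    (htr : t * r ^ 2 < c ^ 2 - a ^ 2 * r ^ 2) (hcs : f ^ 2 ≤ q) (hv : v ≠ 0) :
    0 < (a * f - c / s * v) ^ 2 + t * (q - r ^ 2 / s ^ 2 * v ^ 2) := by
  have hs2 : 0 < s ^ 2 := by positivity
  have hv2 : 0 < v ^ 2 := by positivity
  set w := s * f with hw
  have key : 0 < (a * w - c * v) ^ 2 + t * w ^ 2 - t * r ^ 2 * v ^ 2 := by
    have h2 : 0 < c ^ 2 - a ^ 2 * r ^ 2 - t * r ^ 2 := by linarith
    nlinarith [sq_nonneg ((a ^ 2 + t) * w - a * c * v), mul_pos (mul_pos ht h2) hv2,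
      sq_nonneg w]
  have hLx : s * (a * f - c / s * v) = a * w - c * v := by
    field_simp [hw]; ring
  have h3 : r ^ 2 / s ^ 2 * s ^ 2 = r ^ 2 := div_mul_cancel₀ _ (ne_of_gt hs2)
  have expand : s ^ 2 * ((a * f - c / s * v) ^ 2 + t * (q - r ^ 2 / s ^ 2 * v ^ 2)) =
      (a * w - c * v) ^ 2 + t * (s ^ 2 * q - r ^ 2 * v ^ 2) := by
    calc s ^ 2 * ((a * f - c / s * v) ^ 2 + t * (q - r ^ 2 / s ^ 2 * v ^ 2))
        = (s * (a * f - c / s * v)) ^ 2 + t * (s ^ 2 * q) - t * (r ^ 2 / s ^ 2 * s ^ 2) * v ^ 2 := by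
          ring
      _ = (a * w - c * v) ^ 2 + t * (s ^ 2 * q - r ^ 2 * v ^ 2) := by rw [hLx, h3]; ring
  have hwq : w ^ 2 ≤ s ^ 2 * q := by rw [hw, mul_pow]; nlinarith
  nlinarith [expand, key]

lemma orbit_aux (a c r s f b l : ℝ) (hs : s ≠ 0) (hr : 0 < r) (hc : r * |a| < c)
    (hcl : c = l - b * s) (hcs : f ^ 2 ≤ r ^ 2) :
    Real.sqrt ((a * f - c / s * s) ^ 2 + 0) + (a * f + s * b) = l := by
  have hfle : |f| ≤ r := by
    have : |f| ^ 2 ≤ |r| ^ 2 := by rw [sq_abs, sq_abs]; exact hcs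
    calc |f| ≤ |r| := by nlinarith [abs_nonneg f, abs_nonneg r]
      _ = r := abs_of_pos hr
  have haf : a * f < c := by
    calc a * f ≤ |a * f| := le_abs_self _
      _ = |a| * |f| := abs_mul a f
      _ ≤ |a| * r := by nlinarith [abs_nonneg a]
      _ < c := by rw [mul_comm]; exact hc
  have hss : c / s * s = c := div_mul_cancel₀ c hs
  rw [hss, add_zero, Real.sqrt_sq_eq_abs, abs_of_neg (by linarith), hcl]
  ring

/-- on `g = su(2) × ℝ` with `X = (r·U₁, s)` (with `U₁` a unit vector, `r > 0`,
`s ≠ 0`) and `V = (a·U₁, b)`, if `l > b·s + r·|a|` then there is a one-dimensional family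
`α₀ + t·α₁` (for small `t > 0`) of inner products on `g` whose Randers norms
`√(α(·,·)) + ⟨·,V⟩_bi` take the constant value `l` on the adjoint orbit
`O_X = {(A, s) : A ∈ su(2), ⟨A,A⟩_bi = r²}` of `X`. -/

theorem stmt_10 (U₁ : su 2)
    (hU₁ : binner (U₁ : Matrix (Fin 2) (Fin 2) ℂ) (U₁ : Matrix (Fin 2) (Fin 2) ℂ) = 1)
    (r s a b l : ℝ) (hr : 0 < r) (hs : s ≠ 0)
    (hl : b * s + r * |a| < l) :
    ∃ (α₀ α₁ : (su 2 × ℝ) →ₗ[ℝ] (su 2 × ℝ) →ₗ[ℝ] ℝ) (ε : ℝ),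
      (∀ x y : su 2 × ℝ, α₀ x y = α₀ y x) ∧
      (∀ x y : su 2 × ℝ, α₁ x y = α₁ y x) ∧
      α₁ ≠ 0 ∧ 0 < ε ∧
      ∀ t : ℝ, 0 < t → t < ε →
        (∀ x : su 2 × ℝ, x ≠ 0 → 0 < (α₀ + t • α₁) x x) ∧
        (∀ Y : su 2 × ℝ,
          (binner (Y.1 : Matrix (Fin 2) (Fin 2) ℂ) (Y.1 : Matrix (Fin 2) (Fin 2) ℂ) = r ^ 2 ∧
            Y.2 = s) →
          Real.sqrt ((α₀ + t • α₁) Y Y) +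
            (binner (Y.1 : Matrix (Fin 2) (Fin 2) ℂ) (a • (U₁ : Matrix (Fin 2) (Fin 2) ℂ)) +
              Y.2 * b) = l) := by
  set c : ℝ := l - b * s with hc_def
  have hc : r * |a| < c := by simp only [hc_def]; linarith
  have hc0 : 0 < c := lt_of_le_of_lt (by positivity) hc
  have hca : 0 < c ^ 2 - a ^ 2 * r ^ 2 := by
    nlinarith [mul_pos (sub_pos.mpr hc) (by positivity : (0:ℝ) < c + r * |a|), sq_abs a]
  set L : (su 2 × ℝ) →ₗ[ℝ] ℝ := lfun a (-(c / s)) (U₁ : Matrix (Fin 2) (Fin 2) ℂ) with hL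
  refine ⟨(LinearMap.mul ℝ ℝ).compl₁₂ L L, suForm - (r ^ 2 / s ^ 2) • sndForm,
    (c ^ 2 - a ^ 2 * r ^ 2) / r ^ 2, ?_, ?_, ?_, ?_, ?_⟩
  · intro x y
    simp [LinearMap.compl₁₂_apply, LinearMap.mul_apply', mul_comm]
  · intro x y
    simp only [suForm, sndForm, LinearMap.sub_apply, LinearMap.smul_apply, LinearMap.mk₂_apply,
      smul_eq_mul]
    rw [binner_comm]
    ring
  · intro h
    have h1 := congrArg (fun m : (su 2 × ℝ) →ₗ[ℝ] (su 2 × ℝ) →ₗ[ℝ] ℝ =>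
      m ((0 : su 2), (1 : ℝ)) ((0 : su 2), (1 : ℝ))) h
    simp only [suForm, sndForm, LinearMap.sub_apply, LinearMap.smul_apply, LinearMap.mk₂_apply,
      LinearMap.zero_apply, smul_eq_mul, ZeroMemClass.coe_zero, binner_zero_left,
      mul_one, zero_sub, neg_eq_zero] at h1
    have h2 : r ^ 2 / s ^ 2 ≠ 0 := by positivity
    exact h2 h1
  · positivity
  · intro t ht htε
    have htr : t * r ^ 2 < c ^ 2 - a ^ 2 * r ^ 2 := by
      rw [lt_div_iff₀ (by positivity)] at htε; linarith
    have happly : ∀ x : su 2 × ℝ,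
        ((LinearMap.mul ℝ ℝ).compl₁₂ L L + t • (suForm - (r ^ 2 / s ^ 2) • sndForm)) x x =
        (a * binner (x.1 : Matrix (Fin 2) (Fin 2) ℂ) (U₁ : Matrix (Fin 2) (Fin 2) ℂ)
            - c / s * x.2) ^ 2 +
          t * (binner (x.1 : Matrix (Fin 2) (Fin 2) ℂ) (x.1 : Matrix (Fin 2) (Fin 2) ℂ)
            - r ^ 2 / s ^ 2 * x.2 ^ 2) := by
      intro x
      simp [hL, lfun, suForm, sndForm, LinearMap.add_apply, LinearMap.smul_apply,
        LinearMap.sub_apply, LinearMap.compl₁₂_apply, LinearMap.mul_apply', LinearMap.mk₂_apply,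
        smul_eq_mul]
      ring
    constructor
    · intro x hx
      rw [happly]
      have hq0 : 0 ≤ binner (x.1 : Matrix (Fin 2) (Fin 2) ℂ) (x.1 : Matrix (Fin 2) (Fin 2) ℂ) :=
        binner_self_nonneg _
      have hcs : binner (x.1 : Matrix (Fin 2) (Fin 2) ℂ) (U₁ : Matrix (Fin 2) (Fin 2) ℂ) ^ 2 ≤
          binner (x.1 : Matrix (Fin 2) (Fin 2) ℂ) (x.1 : Matrix (Fin 2) (Fin 2) ℂ) :=
        binner_sq_le _ _ hU₁
      by_cases hv : x.2 = 0
      · have hx1 : (x.1 : Matrix (Fin 2) (Fin 2) ℂ) ≠ 0 := by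
          intro h0
          apply hx
          have h1 : x.1 = 0 := by exact_mod_cast Subtype.ext h0
          exact Prod.ext h1 hv
        have hqpos : 0 < binner (x.1 : Matrix (Fin 2) (Fin 2) ℂ) (x.1 : Matrix (Fin 2) (Fin 2) ℂ) :=
          binner_self_pos _ hx1
        rw [hv]
        clear happly
        nlinarith [mul_pos ht hqpos,
          sq_nonneg (a * binner (x.1 : Matrix (Fin 2) (Fin 2) ℂ) (U₁ : Matrix (Fin 2) (Fin 2) ℂ))]
      · exact posdef_aux a c r s t _ _ _ hs ht htr hcs hv
    · rintro Y ⟨hq, hY2⟩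
      have hcs : binner (Y.1 : Matrix (Fin 2) (Fin 2) ℂ) (U₁ : Matrix (Fin 2) (Fin 2) ℂ) ^ 2 ≤
          r ^ 2 := by
        have h1 := binner_sq_le (Y.1 : Matrix (Fin 2) (Fin 2) ℂ) _ hU₁
        rw [hq] at h1; exact h1
      rw [happly, hq, hY2, binner_smul_right]
      have h0 : r ^ 2 - r ^ 2 / s ^ 2 * s ^ 2 = 0 := by field_simp; ring
      rw [h0, mul_zero]
      exact orbit_aux a c r s _ b l hs hr hc hc_def hcs
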